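/- The matrices B_{n,m} with entries b^{(n,m)}_{ij} = (i(m+1)/(2(i+m))) δ^j_{i+m} if i+m ≤ n and b^{(n,m)}_{ij} = (-1)^{n-j} (i(m+1)/(2j)) β_{n, i+m-n, j} if i+m > n satisfy B_{n,m} = ((m+1)/2) (B_{n,1})^m for all m ≥ 1; in particular B_{n,0} = (1/2) Id_n. -/

import Mathlib

open Finset

/-- The `k`-th elementary symmetric function of `l 1, …, l n`. -/
def esymm (n : ℕ) (l : Fin n → ℝ) (k : ℕ) : ℝ :=
  ∑ s ∈ Finset.univ.powersetCard k, ∏ i ∈ s, l i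

/-- The coefficients `β_{n,m,i}`: `β_{n,1,i} = σ_{n-i+1}`,
`β_{n,m,i} = β_{n,m-1,n} σ_{n-i+1} - β_{n,m-1,i-1}` for `m > 1`, with `β_{n,m,0} = 0`. -/
def beta (σ : ℕ → ℝ) (n : ℕ) : ℕ → ℕ → ℝ
  | 0, _ => 0
  | 1, i => if i = 0 then 0 else σ (n - i + 1)
  | m + 2, i =>
      if i = 0 then 0
      else beta σ n (m + 1) n * σ (n - i + 1) - beta σ n (m + 1) (i - 1)

/-- The matrix `B_{n,1}`: superdiagonal entries `i/(i+1)` (1-based) and last row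
entries `(-1)^{n-j} (n/j) σ_{n-j+1}`. -/
noncomputable def Bn1 (n : ℕ) (σ : ℕ → ℝ) : Matrix (Fin n) (Fin n) ℝ :=
  Matrix.of fun i j =>
    if i.val = n - 1 then
      (-1 : ℝ) ^ (n - 1 - j.val) * ((n : ℝ) / ((j.val : ℝ) + 1)) * σ (n - j.val)
    else if j.val = i.val + 1 then ((i.val : ℝ) + 1) / ((i.val : ℝ) + 2)
    else 0

/-- The matrix `B_{n,m}`, with entries (1-based `i,j`):
`(i(m+1)/(2(i+m))) δ^j_{i+m}` if `i+m ≤ n`, and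
`(-1)^{n-j} (i(m+1)/(2j)) β_{n,i+m-n,j}` if `i+m > n`. -/
noncomputable def Bnm (n : ℕ) (σ : ℕ → ℝ) (m : ℕ) : Matrix (Fin n) (Fin n) ℝ :=
  Matrix.of fun i j =>
    if i.val + 1 + m ≤ n then
      (if j.val + 1 = i.val + 1 + m then
        ((i.val : ℝ) + 1) * ((m : ℝ) + 1) / (2 * ((i.val : ℝ) + 1 + (m : ℝ))) else 0)
    else
      (-1 : ℝ) ^ (n - (j.val + 1)) *
        (((i.val : ℝ) + 1) * ((m : ℝ) + 1) / (2 * ((j.val : ℝ) + 1))) *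
        beta σ n (i.val + 1 + m - n) (j.val + 1)

lemma beta_zero (σ : ℕ → ℝ) (n m : ℕ) : beta σ n m 0 = 0 := by
  match m with
  | 0 => simp [beta]
  | 1 => simp [beta]
  | m + 2 => simp [beta]

lemma step (n : ℕ) (hn : 1 < n) (σ : ℕ → ℝ) (m : ℕ) :
    Bnm n σ (m + 1) = (((m : ℝ) + 2) / ((m : ℝ) + 1)) • (Bnm n σ m * Bn1 n σ) := by
  have hm1 : ((m : ℝ) + 1) ≠ 0 := by positivity
  have hn0 : ((n : ℝ)) ≠ 0 := by positivity
  ext i j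
  have hi := i.isLt
  have hj := j.isLt
  have hj1 : ((j.val : ℝ) + 1) ≠ 0 := by positivity
  simp only [Matrix.smul_apply, Matrix.mul_apply, smul_eq_mul]
  by_cases h1 : i.val + 1 + m ≤ n
  · -- row i of Bnm m has single entry at column t = i+m
    have httlt : i.val + m < n := by omega
    set t : Fin n := ⟨i.val + m, httlt⟩ with ht
    have htv : (t : ℕ) = i.val + m := rfl
    have hsum : ∑ k, Bnm n σ m i k * Bn1 n σ k j
        = (((i.val : ℝ) + 1) * ((m : ℝ) + 1) / (2 * ((i.val : ℝ) + 1 + (m : ℝ))))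
          * Bn1 n σ t j := by
      rw [Finset.sum_eq_single t]
      · simp only [Bnm, Matrix.of_apply, if_pos h1]
        rw [if_pos (show (t : ℕ) + 1 = i.val + 1 + m by omega)]
      · intro k _ hk
        simp only [Bnm, Matrix.of_apply, if_pos h1]
        rw [if_neg (fun hc => hk (Fin.ext (by omega))), zero_mul]
      · exact fun h => absurd (Finset.mem_univ t) h
    rw [hsum]
    by_cases h2 : i.val + 1 + (m + 1) ≤ n
    · -- case 1a : strictly inside
      have htn : ¬ ((t : ℕ) = n - 1) := by omega
      simp only [Bnm, Bn1, Matrix.of_apply, if_pos h2, if_neg htn]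
      by_cases hji : j.val + 1 = i.val + 1 + (m + 1)
      · rw [if_pos hji, if_pos (show (j : ℕ) = (t : ℕ) + 1 by omega)]
        have h3 : ((i.val : ℝ) + 1 + (m : ℝ)) ≠ 0 := by positivity
        have h4 : ((i.val : ℝ) + (m : ℝ) + 2) ≠ 0 := by positivity
        rw [htv]
        push_cast
        field_simp
        ring
      · rw [if_neg hji, if_neg (show ¬ ((j : ℕ) = (t : ℕ) + 1) by omega), mul_zero, mul_zero]
    · -- case 1b : i + 1 + m = n
      have htn : (t : ℕ) = n - 1 := by omega
      have hidx : i.val + 1 + (m + 1) - n = 1 := by omega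
      simp only [Bnm, Bn1, Matrix.of_apply, if_neg (show ¬ (i.val + 1 + (m+1) ≤ n) by omega),
        if_pos htn, hidx]
      have hb : beta σ n 1 ((j : ℕ) + 1) = σ (n - (j : ℕ)) := by
        simp only [beta, if_neg (Nat.succ_ne_zero _)]
        congr 1
        omega
      rw [hb, show n - ((j : ℕ) + 1) = n - 1 - (j : ℕ) by omega]
      have hc : (i.val : ℝ) + 1 + (m : ℝ) = (n : ℝ) := by
        exact_mod_cast congrArg (Nat.cast : ℕ → ℝ) (show i.val + 1 + m = n by omega)
      rw [hc]
      push_cast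
      field_simp
      ring
  · -- case 2 : i + 1 + m > n
    obtain ⟨r, hr⟩ : ∃ r, i.val + 1 + m - n = r + 1 := ⟨i.val + m - n, by omega⟩
    have h2 : ¬ (i.val + 1 + (m + 1) ≤ n) := by omega
    have hr2 : i.val + 1 + (m + 1) - n = r + 2 := by omega
    have hnn : n - 1 < n := by omega
    set last : Fin n := ⟨n - 1, hnn⟩ with hlast
    have hlv : (last : ℕ) = n - 1 := rfl
    rw [show (univ : Finset (Fin n)) = insert last (univ.erase last) from
      (Finset.insert_erase (Finset.mem_univ last)).symm,
      Finset.sum_insert (Finset.notMem_erase _ _)]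
    have hflast : Bnm n σ m i last * Bn1 n σ last j
        = (((i.val : ℝ) + 1) * ((m : ℝ) + 1) / (2 * (n : ℝ))) * beta σ n (r + 1) n
          * ((-1 : ℝ) ^ (n - 1 - (j : ℕ)) * ((n : ℝ) / (((j : ℕ) : ℝ) + 1)) * σ (n - (j : ℕ))) := by
      simp only [Bnm, Bn1, Matrix.of_apply, if_neg h1, hr, if_pos hlv, hlv, if_true]
      rw [show n - (n - 1 + 1) = 0 by omega, show n - 1 + 1 = n by omega, pow_zero,
        show ((n - 1 : ℕ) : ℝ) + 1 = (n : ℝ) by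
          rw [Nat.cast_sub (by omega : 1 ≤ n)]; ring]
      ring
    rw [hflast]
    have hbeta : beta σ n (r + 2) ((j : ℕ) + 1)
        = beta σ n (r + 1) n * σ (n - (j : ℕ)) - beta σ n (r + 1) (j : ℕ) := by
      simp only [beta, if_neg (Nat.succ_ne_zero _)]
      rw [show n - ((j : ℕ) + 1) + 1 = n - (j : ℕ) by omega, Nat.add_sub_cancel]
    by_cases hj0 : (j : ℕ) = 0
    · have hzero : ∑ k ∈ univ.erase last, Bnm n σ m i k * Bn1 n σ k j = 0 := by
        apply Finset.sum_eq_zero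
        intro k hk
        have hkl : ¬ ((k : ℕ) = n - 1) := by
          intro hc
          exact (Finset.mem_erase.mp hk).1 (Fin.ext (by omega))
        simp only [Bn1, Matrix.of_apply, if_neg hkl,
          if_neg (show ¬ ((j : ℕ) = (k : ℕ) + 1) by omega), mul_zero]
      rw [hzero, add_zero]
      simp only [Bnm, Matrix.of_apply, if_neg h2, hr2]
      rw [hbeta, hj0, beta_zero, show n - (0 + 1) = n - 1 - 0 by omega]
      simp only [Nat.sub_zero]
      push_cast
      field_simp
      ring
    · -- j ≥ 1 : erase-sum has single term at prev = j - 1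
      have hplt : (j : ℕ) - 1 < n := by omega
      set prev : Fin n := ⟨(j : ℕ) - 1, hplt⟩ with hprev
      have hpv : (prev : ℕ) + 1 = (j : ℕ) := by
        simp only [hprev]; omega
      have hsum2 : ∑ k ∈ univ.erase last, Bnm n σ m i k * Bn1 n σ k j
          = Bnm n σ m i prev * Bn1 n σ prev j := by
        apply Finset.sum_eq_single_of_mem
        · refine Finset.mem_erase.mpr ⟨?_, Finset.mem_univ _⟩
          intro hc
          have : (prev : ℕ) = n - 1 := by rw [hc]
          omega
        · intro k hk hkp
          have hkl : ¬ ((k : ℕ) = n - 1) := by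
            intro hc; exact (Finset.mem_erase.mp hk).1 (Fin.ext (by omega))
          have hjk : ¬ ((j : ℕ) = (k : ℕ) + 1) := by
            intro hc; exact hkp (Fin.ext (show (k : ℕ) = (prev : ℕ) by omega))
          simp only [Bn1, Matrix.of_apply, if_neg hkl, if_neg hjk, mul_zero]
      rw [hsum2]
      have hpl : ¬ ((prev : ℕ) = n - 1) := by omega
      simp only [Bnm, Bn1, Matrix.of_apply, if_neg h1, hr, if_neg h2, hr2, if_neg hpl,
        if_pos hpv.symm]
      rw [hbeta]
      rw [show ((((j : ℕ) - 1 : ℕ)) : ℝ) + 2 = ((j : ℕ) : ℝ) + 1 from by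
            rw [Nat.cast_sub (by omega : 1 ≤ (j : ℕ))]; ring,
          show ((((j : ℕ) - 1 : ℕ)) : ℝ) + 1 = ((j : ℕ) : ℝ) from by
            rw [Nat.cast_sub (by omega : 1 ≤ (j : ℕ))]; ring]
      rw [show (j : ℕ) - 1 + 1 = (j : ℕ) by omega]
      rw [show n - ((j : ℕ) + 1) = n - 1 - (j : ℕ) by omega,
        show n - (j : ℕ) = (n - 1 - (j : ℕ)) + 1 by omega, pow_succ]
      have hjr : ((j : ℕ) : ℝ) ≠ 0 := by exact_mod_cast hj0
      push_cast
      field_simp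
      ring

/-- `B_{n,m} = ((m+1)/2) (B_{n,1})^m` for all `m ≥ 1`; in particular
`B_{n,0} = (1/2) Id`. -/
theorem Bnm_eq_pow (n : ℕ) (hn : 1 < n) (l : Fin n → ℝ) (σ : ℕ → ℝ)
    (hσ : ∀ k, σ k = esymm n l k) :
    (∀ m : ℕ, 1 ≤ m → Bnm n σ m = (((m : ℝ) + 1) / 2) • (Bn1 n σ) ^ m) ∧
      Bnm n σ 0 = (1 / 2 : ℝ) • (1 : Matrix (Fin n) (Fin n) ℝ) := by
  have h0 : Bnm n σ 0 = (1 / 2 : ℝ) • (1 : Matrix (Fin n) (Fin n) ℝ) := by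
    ext i j
    simp only [Bnm, Matrix.of_apply, Matrix.smul_apply, Matrix.one_apply, smul_eq_mul]
    rw [if_pos (by omega : i.val + 1 + 0 ≤ n)]
    by_cases hij : i = j
    · rw [if_pos (by rw [hij]), if_pos hij]
      have : ((i.val : ℝ) + 1) ≠ 0 := by positivity
      push_cast
      field_simp
      ring
    · rw [if_neg (fun hc => hij (Fin.ext (by omega)).symm), if_neg hij, mul_zero]
  have key : ∀ m : ℕ, Bnm n σ m = (((m : ℝ) + 1) / 2) • (Bn1 n σ) ^ m := by
    intro m
    induction m with
    | zero => simpa using h0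
    | succ m ih =>
      rw [step n hn σ m, ih, pow_succ, Matrix.smul_mul, smul_smul]
      congr 1
      have hm1 : ((m : ℝ) + 1) ≠ 0 := by positivity
      push_cast
      field_simp
      ring
  exact ⟨fun m _ => key m, h0⟩
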